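/- Let n ≥ 0 be a natural number. Define the GHZ-type amplitude function φ : Fin 2 × Fin 2 × (Fin n → Fin 2) → ℂ by φ(a,b,y) = 1/√2 if a = b and y i = a for all i, and φ(a,b,y) = 0 otherwise. Fix r : Fin n → Fin 2 and define ξ_r : Fin 2 × Fin 2 → ℂ by ξ_r(a,b) = Σ_{y : Fin n → Fin 2} φ(a,b,y) · Π_{i} ((−1)^{(r i)·(y i)} / √2), where the values r i, y i ∈ Fin 2 are interpreted as the integers 0 or 1. Then ξ_r(0,0) = 2^{−n/2}/√2, ξ_r(1,1) = (−1)^{Σ_i r i} · 2^{−n/2}/√2, and ξ_r(0,1) = ξ_r(1,0) = 0. (Thus each Hadamard-basis measurement outcome r of the last n qubits of an (n+2)-qubit GHZ state occurs with probability 2^{−n} and leaves the first two qubits in the EPR state (|00⟩ + (−1)^{parity(r)}|11⟩)/√2.) -/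

import Mathlib

/-- Measuring the last `n` qubits of an `(n+2)`-qubit GHZ state in the Hadamard
basis: for every outcome `r`, the unnormalized post-measurement amplitude
`ξ_r` of the first two qubits is `2^{-n/2}/√2` on `|00⟩`,
`(-1)^{parity r}·2^{-n/2}/√2` on `|11⟩`, and `0` on `|01⟩, |10⟩`. -/
theorem stmt_17 (n : ℕ) (r : Fin n → Fin 2) :
    let φ : Fin 2 × Fin 2 × (Fin n → Fin 2) → ℂ := fun x =>
      if x.1 = x.2.1 ∧ ∀ i, x.2.2 i = x.1 then 1 / (Real.sqrt 2 : ℂ) else 0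
    let ξ : Fin 2 × Fin 2 → ℂ := fun ab =>
      ∑ y : Fin n → Fin 2, φ (ab.1, ab.2, y) *
        ∏ i, ((-1 : ℂ) ^ ((r i : ℕ) * (y i : ℕ)) / (Real.sqrt 2 : ℂ))
    ξ (0, 0) = 1 / ((Real.sqrt 2 : ℂ) ^ n * (Real.sqrt 2 : ℂ)) ∧
    ξ (1, 1) = (-1 : ℂ) ^ (∑ i, (r i : ℕ)) /
      ((Real.sqrt 2 : ℂ) ^ n * (Real.sqrt 2 : ℂ)) ∧
    ξ (0, 1) = 0 ∧ ξ (1, 0) = 0 := by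
  intro φ ξ
  have h2 : (Real.sqrt 2 : ℂ) ≠ 0 := by
    exact_mod_cast Complex.ofReal_ne_zero.2 (Real.sqrt_ne_zero'.2 (by norm_num))
  refine ⟨?_, ?_, ?_, ?_⟩
  · show (∑ y : Fin n → Fin 2, φ (0, 0, y) * _) = _
    rw [Finset.sum_eq_single (fun _ => (0 : Fin 2))]
    · simp only [φ]
      rw [if_pos (⟨trivial, fun _ => trivial⟩ : True ∧ (Fin n → True))]
      simp [Finset.prod_const]
    · intro y _ hy
      have : ¬ ∀ i, y i = 0 := fun h => hy (funext h)
      simp only [φ]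
      rw [if_neg (by tauto)]
      simp
    · intro h; exact absurd (Finset.mem_univ _) h
  · show (∑ y : Fin n → Fin 2, φ (1, 1, y) * _) = _
    rw [Finset.sum_eq_single (fun _ => (1 : Fin 2))]
    · simp only [φ]
      rw [if_pos (⟨trivial, fun _ => trivial⟩ : True ∧ (Fin n → True))]
      simp only [Fin.val_one, mul_one]
      rw [Finset.prod_div_distrib, Finset.prod_const, Finset.prod_pow_eq_pow_sum, Finset.card_univ, Fintype.card_fin]
      field_simp
    · intro y _ hy
      have : ¬ ∀ i, y i = 1 := fun h => hy (funext h)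
      simp only [φ]
      rw [if_neg (by tauto)]
      simp
    · intro h; exact absurd (Finset.mem_univ _) h
  · show (∑ y : Fin n → Fin 2, φ (0, 1, y) * _) = _
    apply Finset.sum_eq_zero
    intro y _
    simp only [φ]
    rw [if_neg (by simp)]
    simp
  · show (∑ y : Fin n → Fin 2, φ (1, 0, y) * _) = _
    apply Finset.sum_eq_zero
    intro y _
    simp only [φ]
    rw [if_neg (by simp)]
    simp
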